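/- Let H be a connected graph with girth at least 7 on n vertices such that G = H² is not complete. Then G has at most n maximal cliques. -/

import Mathlib

open SimpleGraph

variable {V : Type*}

/-- The square of a graph: `x` and `y` are adjacent iff `1 ≤ d_H(x,y) ≤ 2`. -/
def graphSq (H : SimpleGraph V) : SimpleGraph V where
  Adj x y := x ≠ y ∧ (H.Adj x y ∨ ∃ z, H.Adj x z ∧ H.Adj z y)
  symm := by
    constructor
    rintro x y ⟨hxy, h | ⟨z, h1, h2⟩⟩
    · exact ⟨hxy.symm, Or.inl h.symm⟩
    · exact ⟨hxy.symm, Or.inr ⟨z, h2.symm, h1.symm⟩⟩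
  loopless := ⟨fun x h => h.1 rfl⟩

/-- `Q` is a maximal clique of `G`. -/
def IsMaxClique (G : SimpleGraph V) (Q : Set V) : Prop :=
  G.IsClique Q ∧ ∀ R : Set V, G.IsClique R → Q ⊆ R → R = Q

/-- `xy` is a forced edge of `G`: it lies in at least two distinct maximal cliques. -/
def Forced (G : SimpleGraph V) (x y : V) : Prop :=
  G.Adj x y ∧ ∃ Q₁ Q₂ : Set V, Q₁ ≠ Q₂ ∧ IsMaxClique G Q₁ ∧ IsMaxClique G Q₂ ∧
    x ∈ Q₁ ∧ y ∈ Q₁ ∧ x ∈ Q₂ ∧ y ∈ Q₂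

/-- The subgraph of `G` consisting of all forced edges. -/
def forcedSubgraph (G : SimpleGraph V) : SimpleGraph V where
  Adj := Forced G
  symm := by
    constructor
    rintro x y ⟨hadj, Q₁, Q₂, hne, h1, h2, hx1, hy1, hx2, hy2⟩
    exact ⟨hadj.symm, Q₁, Q₂, hne, h1, h2, hy1, hx1, hy2, hx2⟩
  loopless := ⟨fun x h => h.1.ne rfl⟩

/-- `H` contains no cycle of length 3 and no cycle of length 5. -/
def C3C5Free (H : SimpleGraph V) : Prop :=
  ∀ (v : V) (w : H.Walk v v), w.IsCycle → w.length ≠ 3 ∧ w.length ≠ 5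

/-- The set `S` induces a star in `F`: at least two vertices, a center adjacent to
all others, and the non-center vertices pairwise non-adjacent. -/
def IsStarOn (F : SimpleGraph V) (S : Set V) : Prop :=
  S.Nontrivial ∧ ∃ c ∈ S, (∀ x ∈ S, x ≠ c → F.Adj c x) ∧
    ∀ x ∈ S, ∀ y ∈ S, x ≠ c → y ≠ c → x ≠ y → ¬ F.Adj x y

section aux
variable {H : SimpleGraph V}

lemma cycle_long (hg : 7 ≤ H.girth) {a : V} {w : H.Walk a a} (hw : w.IsCycle) :
    7 ≤ w.length := by
  have h1 : H.egirth ≤ w.length := le_egirth.mp le_rfl a w hw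
  have h3 : ((7 : ℕ) : ℕ∞) ≤ H.egirth := by
    rcases eq_or_ne H.egirth ⊤ with h | h
    · simp [h]
    · rw [← ENat.coe_toNat h]; exact_mod_cast hg
  have := h3.trans h1
  exact_mod_cast this

lemma noC3 (hg : 7 ≤ H.girth) {a b c : V} (hab : H.Adj a b) (hbc : H.Adj b c)
    (hca : H.Adj c a) : False := by
  have hw : (Walk.cons hab (Walk.cons hbc (Walk.cons hca Walk.nil))).IsCycle := by
    have := hab.ne; have := hbc.ne; have := hca.ne
    simp [Walk.isCycle_def, Walk.isTrail_def]; tauto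
  have := cycle_long hg hw; simp at this

lemma noC4 (hg : 7 ≤ H.girth) {a b c d : V} (hab : H.Adj a b) (hbc : H.Adj b c)
    (hcd : H.Adj c d) (hda : H.Adj d a) (hac : a ≠ c) (hbd : b ≠ d) : False := by
  have hw : (Walk.cons hab (Walk.cons hbc (Walk.cons hcd (Walk.cons hda
      Walk.nil)))).IsCycle := by
    have := hab.ne; have := hbc.ne; have := hcd.ne; have := hda.ne
    simp [Walk.isCycle_def, Walk.isTrail_def]; tauto
  have := cycle_long hg hw; simp at this

lemma noC5 (hg : 7 ≤ H.girth) {a b c d e : V} (hab : H.Adj a b) (hbc : H.Adj b c)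
    (hcd : H.Adj c d) (hde : H.Adj d e) (hea : H.Adj e a)
    (hac : a ≠ c) (had : a ≠ d) (hbd : b ≠ d) (hbe : b ≠ e) (hce : c ≠ e) : False := by
  have hw : (Walk.cons hab (Walk.cons hbc (Walk.cons hcd (Walk.cons hde
      (Walk.cons hea Walk.nil))))).IsCycle := by
    have := hab.ne; have := hbc.ne; have := hcd.ne; have := hde.ne; have := hea.ne
    simp [Walk.isCycle_def, Walk.isTrail_def]; tauto
  have := cycle_long hg hw; simp at this

lemma noC6 (hg : 7 ≤ H.girth) {a b c d e f : V} (hab : H.Adj a b) (hbc : H.Adj b c)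
    (hcd : H.Adj c d) (hde : H.Adj d e) (hef : H.Adj e f) (hfa : H.Adj f a)
    (hac : a ≠ c) (had : a ≠ d) (hae : a ≠ e) (hbd : b ≠ d) (hbe : b ≠ e) (hbf : b ≠ f)
    (hce : c ≠ e) (hcf : c ≠ f) (hdf : d ≠ f) : False := by
  have hw : (Walk.cons hab (Walk.cons hbc (Walk.cons hcd (Walk.cons hde
      (Walk.cons hef (Walk.cons hfa Walk.nil)))))).IsCycle := by
    have := hab.ne; have := hbc.ne; have := hcd.ne; have := hde.ne; have := hef.ne
    have := hfa.ne
    simp [Walk.isCycle_def, Walk.isTrail_def]; tauto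
  have := cycle_long hg hw; simp at this
end aux


def NH (H : SimpleGraph V) (v : V) : Set V := {u | u = v ∨ H.Adj v u}

lemma nh_clique (v : V) : (graphSq H).IsClique (NH H v) := by
  rintro x (rfl | hx) y (rfl | hy) hxy
  · exact absurd rfl hxy
  · exact ⟨hxy, Or.inl hy⟩
  · exact ⟨hxy, Or.inl hx.symm⟩
  · exact ⟨hxy, Or.inr ⟨v, hx.symm, hy⟩⟩


lemma helly (hg : 7 ≤ H.girth) {S : Set V} (hS : (graphSq H).IsClique S)
    (hne : S.Nonempty) : ∃ v, S ⊆ NH H v := by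
  obtain ⟨a, ha⟩ := hne
  by_cases hnt : ∃ b ∈ S, b ≠ a
  · obtain ⟨b, hb, hba⟩ := hnt
    by_cases hAB : H.Adj a b
    · have key : ∀ x ∈ S, x ≠ a → x ≠ b →
          (H.Adj a x ∧ ¬H.Adj b x) ∨ (H.Adj b x ∧ ¬H.Adj a x) := by
        intro x hx hxa hxb
        by_cases h1 : H.Adj a x <;> by_cases h2 : H.Adj b x
        · exact absurd (noC3 hg hAB h2 h1.symm) id
        · exact Or.inl ⟨h1, h2⟩
        · exact Or.inr ⟨h2, h1⟩
        · obtain ⟨-, hor1⟩ := hS hx ha hxa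
          obtain ⟨-, hor2⟩ := hS hx hb hxb
          obtain ⟨z, hxz, hza⟩ := hor1.resolve_left (fun h => h1 h.symm)
          obtain ⟨w, hxw, hwb⟩ := hor2.resolve_left (fun h => h2 h.symm)
          by_cases hzw : z = w
          · subst hzw
            exact (noC3 hg hAB hwb.symm hza).elim
          · -- 5-cycle x z a b w
            exact (noC5 hg hxz hza hAB hwb.symm hxw.symm hxa hxb
              (by rintro rfl; exact h2 hxz.symm) hzw
              (by rintro rfl; exact h1 hxw.symm)).elim
      by_cases hyp : ∃ y ∈ S, y ≠ a ∧ y ≠ b ∧ H.Adj b y ∧ ¬ H.Adj a y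
      · obtain ⟨y, hy, hya, hyb, hby, hay⟩ := hyp
        refine ⟨b, fun x hx => ?_⟩
        by_cases hxb : x = b
        · exact Or.inl hxb
        by_cases hxa : x = a
        · exact Or.inr (hxa ▸ hAB.symm)
        rcases key x hx hxa hxb with ⟨hax, hbx⟩ | ⟨hbx, -⟩
        · exfalso
          have hxy : x ≠ y := fun h => hay (h ▸ hax)
          obtain ⟨-, hor⟩ := hS hx hy hxy
          rcases hor with h | ⟨z, hxz, hzy⟩
          · -- 4-cycle a x y b
            exact noC4 hg hax h hby.symm hAB.symm hya.symm hxb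
          · -- 5-cycle a x z y b
            exact noC5 hg hax hxz hzy hby.symm hAB.symm
              (by rintro rfl; exact hay hzy) hya.symm hxy hxb
              (by rintro rfl; exact hbx hxz.symm)
        · exact Or.inr hbx
      · refine ⟨a, fun x hx => ?_⟩
        by_cases hxa : x = a
        · exact Or.inl hxa
        by_cases hxb : x = b
        · exact Or.inr (hxb ▸ hAB)
        rcases key x hx hxa hxb with ⟨hax, -⟩ | ⟨hbx, hax⟩
        · exact Or.inr hax
        · exact absurd ⟨x, hx, hxa, hxb, hbx, hax⟩ hyp
    · obtain ⟨-, hor⟩ := hS ha hb (fun h => hba h.symm)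
      obtain ⟨c, hac, hcb⟩ := hor.resolve_left hAB
      refine ⟨c, fun x hx => ?_⟩
      by_cases hxc : x = c
      · exact Or.inl hxc
      by_cases hxa : x = a
      · exact Or.inr (hxa ▸ hac.symm)
      by_cases hxb : x = b
      · exact Or.inr (hxb ▸ hcb)
      have hab' : a ≠ b := fun h => hba h.symm
      obtain ⟨-, hor1⟩ := hS hx ha hxa
      obtain ⟨-, hor2⟩ := hS hx hb hxb
      by_cases h1 : H.Adj x a <;> by_cases h2 : H.Adj x b
      · exact absurd (noC4 hg h1.symm h2 hcb.symm hac.symm hab' hxc) id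
      · obtain ⟨w, hxw, hwb⟩ := hor2.resolve_left h2
        by_cases hwc : w = c
        · exact Or.inr (hwc ▸ hxw).symm
        · -- 5-cycle a x w b c
          exact absurd (noC5 hg h1.symm hxw hwb hcb.symm hac.symm
            (by rintro rfl; exact hAB hwb) hab' hxb hxc hwc) id
      · obtain ⟨w, hxw, hwa⟩ := hor1.resolve_left h1
        by_cases hwc : w = c
        · exact Or.inr (hwc ▸ hxw).symm
        · -- 5-cycle b x w a c
          exact absurd (noC5 hg h2.symm hxw hwa hac hcb
            (by rintro rfl; exact hAB hwa.symm) hab'.symm hxa hxc hwc) id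
      · obtain ⟨z1, hxz1, hz1a⟩ := hor1.resolve_left h1
        obtain ⟨z2, hxz2, hz2b⟩ := hor2.resolve_left h2
        by_cases hz1c : z1 = c
        · exact Or.inr (hz1c ▸ hxz1).symm
        by_cases hz2c : z2 = c
        · exact Or.inr (hz2c ▸ hxz2).symm
        by_cases hz12 : z1 = z2
        · subst hz12
          -- 4-cycle a z1 b c  (edges a-z1, z1-b, b-c, c-a)
          exact absurd (noC4 hg hz1a.symm hz2b hcb.symm hac.symm hab' hz1c) id
        · -- 6-cycle x z1 a c b z2
          exact absurd (noC6 hg hxz1 hz1a hac hcb hz2b.symm hxz2.symm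
            hxa hxc hxb hz1c (by rintro rfl; exact h2 hxz1) hz12
            hab' (by rintro rfl; exact h1 hxz2) (Ne.symm hz2c)) id
  · refine ⟨a, fun x hx => Or.inl ?_⟩
    by_contra h
    exact hnt ⟨x, hx, h⟩

theorem stmt16 [Fintype V] (H : SimpleGraph V)
    (hconn : H.Connected) (hgirth : 7 ≤ H.girth) (hnc : graphSq H ≠ ⊤) :
    {Q : Set V | IsMaxClique (graphSq H) Q}.ncard ≤ Fintype.card V := by
  classical
  have hVne : Nonempty V := by
    by_contra h
    exact hnc (by ext x y; exact (h ⟨x⟩).elim)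
  have key : ∀ Q ∈ {Q : Set V | IsMaxClique (graphSq H) Q}, ∃ v, Q = NH H v := by
    rintro Q ⟨hcl, hmax⟩
    have hQne : Q.Nonempty := by
      by_contra h
      rw [Set.not_nonempty_iff_eq_empty] at h
      obtain ⟨a⟩ := hVne
      have h1 : ({a} : Set V) = Q :=
        hmax {a} (Set.pairwise_singleton a _) (by simp [h])
      rw [h] at h1
      exact (Set.singleton_ne_empty a) h1
    obtain ⟨v, hv⟩ := helly hgirth hcl hQne
    exact ⟨v, (hmax _ (nh_clique v) hv).symm⟩
  have hsub : {Q : Set V | IsMaxClique (graphSq H) Q} ⊆ NH H '' Set.univ := by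
    intro Q hQ
    obtain ⟨v, rfl⟩ := key Q hQ
    exact ⟨v, Set.mem_univ v, rfl⟩
  calc {Q : Set V | IsMaxClique (graphSq H) Q}.ncard
      ≤ (NH H '' Set.univ).ncard := Set.ncard_le_ncard hsub (Set.finite_univ.image _)
    _ ≤ (Set.univ : Set V).ncard := Set.ncard_image_le Set.finite_univ
    _ = Fintype.card V := by rw [Set.ncard_univ, Nat.card_eq_fintype_card]
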